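/- Let G be a connected finite simple graph, let uv be a non-edge of G, set a = d_G(u) and b = d_G(v), and assume all roots of LM_G and of LM_{G+uv} are real. Suppose two-place LMRIV occurs when uv is added, with changed roots λ and μ where λ is the largest root of LM_G: that is, the multiset of real roots of LM_{G+uv} equals the multiset of roots of LM_G with one copy each of λ and μ removed and λ+1 and μ+1 added. Then λ + μ = a + b + 1 and λ·μ = a·b. -/

import Mathlib

open Polynomial Finset

namespace LMRIV

open scoped Classical

variable {V : Type*}

/-- The degree of a vertex. -/
noncomputable def deg [Fintype V] (G : SimpleGraph V) (v : V) : ℕ :=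
  (univ.filter fun w => G.Adj v w).card

/-- The finset of edges of `G`. -/
noncomputable def edges [Fintype V] (G : SimpleGraph V) : Finset (Sym2 V) :=
  univ.filter fun e => e ∈ G.edgeSet

/-- A matching: a set of pairwise disjoint edges. -/
def IsMatching (G : SimpleGraph V) (M : Finset (Sym2 V)) : Prop :=
  (↑M : Set (Sym2 V)) ⊆ G.edgeSet ∧
    ∀ e ∈ M, ∀ f ∈ M, e ≠ f → ∀ x : V, x ∈ e → x ∉ f

/-- The finset of all matchings of `G` (including the empty matching). -/
noncomputable def matchings [Fintype V] (G : SimpleGraph V) : Finset (Finset (Sym2 V)) :=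
  univ.filter fun M => IsMatching G M

/-- The set of vertices covered by a matching. -/
noncomputable def covered [Fintype V] (M : Finset (Sym2 V)) : Finset V :=
  univ.filter fun x => ∃ e ∈ M, x ∈ e

/-- The Laplacian matching polynomial of `G`, with coefficients in `R`. -/
noncomputable def LM (R : Type*) [CommRing R] [Fintype V] (G : SimpleGraph V) :
    Polynomial R :=
  ∑ M ∈ matchings G, (-1 : Polynomial R) ^ M.card *
    ∏ v ∈ univ \ covered M, (X - C (deg G v : R))

/-- `p_r(G)`: the sum of the `r`-th powers of the complex roots of `LM_G`. -/
noncomputable def psum [Fintype V] (G : SimpleGraph V) (r : ℕ) : ℂ :=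
  (((LM ℂ G).roots).map (· ^ r)).sum

/-- `A_r(G) = Σ_v d_G(v)^r`. -/
noncomputable def A [Fintype V] (G : SimpleGraph V) (r : ℕ) : ℕ :=
  ∑ v : V, (deg G v) ^ r

/-- `B(G) = Σ_{xy ∈ E(G)} d_G(x) d_G(y)`. -/
noncomputable def B [Fintype V] (G : SimpleGraph V) : ℕ :=
  ∑ e ∈ edges G, Sym2.lift ⟨fun x y => deg G x * deg G y, fun x y => mul_comm _ _⟩ e

/-- `C(G) = Σ_{xy ∈ E(G)} (d_G(x)^2 d_G(y) + d_G(x) d_G(y)^2)`. -/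
noncomputable def Csum [Fintype V] (G : SimpleGraph V) : ℕ :=
  ∑ e ∈ edges G,
    Sym2.lift ⟨fun x y => deg G x ^ 2 * deg G y + deg G x * deg G y ^ 2,
      fun x y => by ring⟩ e

/-- The graph obtained from `G` by adding the edge `uv`. -/
def addEdge (G : SimpleGraph V) (u v : V) : SimpleGraph V :=
  G ⊔ SimpleGraph.fromEdgeSet {s(u, v)}

/-- `S_w = Σ_{x ∈ N_G(w)} d_G(x)`. -/
noncomputable def Ssum [Fintype V] (G : SimpleGraph V) (w : V) : ℕ :=
  ∑ x ∈ univ.filter fun x => G.Adj w x, deg G x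

/-- `T_w = Σ_{x ∈ N_G(w)} d_G(x)^2`. -/
noncomputable def Tsum [Fintype V] (G : SimpleGraph V) (w : V) : ℕ :=
  ∑ x ∈ univ.filter fun x => G.Adj w x, (deg G x) ^ 2

/-- The `r`-th elementary symmetric polynomial of the degree sequence of `G`. -/
noncomputable def esymmDeg [Fintype V] (G : SimpleGraph V) (r : ℕ) : ℕ :=
  ∑ s ∈ univ.powersetCard r, ∏ v ∈ s, deg G v

/-- `φ_2(G)`: the number of 2-matchings of `G`. -/
noncomputable def phi2 [Fintype V] (G : SimpleGraph V) : ℕ :=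
  ((matchings G).filter fun M => M.card = 2).card


section Aux


lemma esymm_zero' (s : Multiset ℝ) : s.esymm 0 = 1 := by
  simp [Multiset.esymm, Multiset.powersetCard_zero_left]

lemma esymm_cons (x : ℝ) (s : Multiset ℝ) (k : ℕ) :
    (x ::ₘ s).esymm (k+1) = s.esymm (k+1) + x * s.esymm k := by
  simp only [Multiset.esymm, Multiset.powersetCard_cons, Multiset.map_add, Multiset.sum_add,
    Multiset.map_map, Function.comp_def, Multiset.prod_cons]
  rw [Multiset.sum_map_mul_left]

lemma esymm_one' (s : Multiset ℝ) : s.esymm 1 = s.sum := by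
  induction s using Multiset.induction with
  | empty => simp [Multiset.esymm, Multiset.powersetCard_zero_right]
  | cons x s ih => rw [esymm_cons, ih, esymm_zero']; simp [add_comm]

lemma esymm_two (s : Multiset ℝ) :
    s.esymm 2 = (s.sum ^ 2 - (s.map (· ^ 2)).sum) / 2 := by
  induction s using Multiset.induction with
  | empty => simp [Multiset.esymm, Multiset.powersetCard_zero_right]
  | cons x s ih => rw [esymm_cons, ih, esymm_one']; simp; ring

lemma esymm_three (s : Multiset ℝ) :
    s.esymm 3 = (s.sum ^ 3 - 3 * s.sum * (s.map (· ^ 2)).sum + 2 * (s.map (· ^ 3)).sum) / 6 := by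
  induction s using Multiset.induction with
  | empty => simp [Multiset.esymm, Multiset.powersetCard_zero_right]
  | cons x s ih => rw [esymm_cons, ih, esymm_two]; simp; ring

lemma coeff_prod_sub (f : V → ℝ) (S : Finset V) (k : ℕ) (h : k ≤ S.card) :
    (∏ v ∈ S, (X - C (f v))).coeff k
      = (-1) ^ (S.card - k) * (S.val.map f).esymm (S.card - k) := by
  have : (∏ v ∈ S, (X - C (f v))) = ((S.val.map f).map fun r => X - C r).prod := by
    rw [Multiset.map_map]; rfl
  have hc : Multiset.card (S.val.map f) = S.card := by
    rw [Multiset.card_map]; rfl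
  rw [this, Multiset.prod_X_sub_C_coeff _ (by rw [hc]; exact h), hc]

lemma mem_matchings [Fintype V] {H : SimpleGraph V} {M : Finset (Sym2 V)} :
    M ∈ matchings H ↔ IsMatching H M := by simp [matchings]

lemma filter_mem_sym2 [Fintype V] {x y : V} (hxy : x ≠ y) :
    (univ.filter (· ∈ s(x, y)) : Finset V) = {x, y} := by
  ext z; simp [Sym2.mem_iff]

lemma covered_empty [Fintype V] : covered (∅ : Finset (Sym2 V)) = ∅ := by
  simp [covered]

lemma empty_mem_matchings [Fintype V] (H : SimpleGraph V) : ∅ ∈ matchings H := by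
  simp [mem_matchings, IsMatching]

lemma singleton_mem_matchings [Fintype V] {H : SimpleGraph V} {e : Sym2 V}
    (he : e ∈ edges H) : {e} ∈ matchings H := by
  rw [mem_matchings]
  constructor
  · intro f hf
    simp only [Finset.coe_singleton, Set.mem_singleton_iff] at hf
    subst hf
    simpa [edges] using he
  · intro e1 h1 f1 h2 hne
    simp only [Finset.mem_singleton] at h1 h2
    subst h1; subst h2; exact absurd rfl hne

lemma covered_singleton [Fintype V] {x y : V} (hxy : x ≠ y) :
    covered ({s(x, y)} : Finset (Sym2 V)) = {x, y} := by
  ext z; simp [covered, Sym2.mem_iff]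

lemma covered_card [Fintype V] {H : SimpleGraph V} {M : Finset (Sym2 V)}
    (hM : IsMatching H M) : (covered M).card = 2 * M.card := by
  have hcov : covered M = M.biUnion (fun e => univ.filter (· ∈ e)) := by
    ext z; simp [covered, Finset.mem_biUnion]
  rw [hcov, Finset.card_biUnion]
  · rw [Finset.sum_congr rfl (fun e he => ?_), Finset.sum_const, smul_eq_mul, mul_comm]
    have hedge : e ∈ H.edgeSet := hM.1 he
    induction e using Sym2.ind with
    | _ x y =>
      have hxy : x ≠ y := (H.mem_edgeSet.mp hedge).ne
      rw [filter_mem_sym2 hxy, Finset.card_insert_of_notMem (by simpa using hxy),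
        Finset.card_singleton]
  · intro e he f hf hef
    simp only [Finset.disjoint_left, Finset.mem_filter]
    rintro z ⟨-, hz1⟩ ⟨-, hz2⟩
    exact hM.2 e he f hf hef z hz1 hz2

variable [Fintype V]

lemma prod_monic (S : Finset V) (f : V → ℝ) : (∏ v ∈ S, (X - C (f v))).Monic :=
  monic_prod_of_monic _ _ fun _ _ => monic_X_sub_C _

lemma prod_natDegree (S : Finset V) (f : V → ℝ) :
    (∏ v ∈ S, (X - C (f v))).natDegree = S.card := by
  rw [natDegree_prod_of_monic _ _ fun _ _ => monic_X_sub_C _]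
  simp

lemma LM_coeff_eq (H : SimpleGraph V) {k : ℕ} (hk3 : Fintype.card V - 3 ≤ k) :
    (LM ℝ H).coeff k =
      (∏ v ∈ (univ : Finset V), (X - C ((deg H v : ℝ)))).coeff k -
        ∑ e ∈ edges H, (∏ v ∈ univ \ covered {e}, (X - C ((deg H v : ℝ)))).coeff k := by
  rw [LM, finset_sum_coeff]
  have hterm : ∀ M ∈ matchings H,
      ((-1 : ℝ[X]) ^ M.card * ∏ v ∈ univ \ covered M, (X - C ((deg H v : ℝ)))).coeff k
        = (-1 : ℝ) ^ M.card * (∏ v ∈ univ \ covered M, (X - C ((deg H v : ℝ)))).coeff k := by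
    intro M _
    rw [show ((-1 : ℝ[X]) ^ M.card) = C ((-1 : ℝ) ^ M.card) by rw [map_pow, map_neg, map_one],
      coeff_C_mul]
  rw [Finset.sum_congr rfl hterm,
    ← Finset.sum_filter_add_sum_filter_not (matchings H) (fun M => M.card ≤ 1)]
  have h2 : ∀ M ∈ (matchings H).filter (fun M => ¬ M.card ≤ 1),
      (-1 : ℝ) ^ M.card * (∏ v ∈ univ \ covered M, (X - C ((deg H v : ℝ)))).coeff k = 0 := by
    intro M hM
    rw [Finset.mem_filter] at hM
    obtain ⟨hM1, hM2⟩ := hM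
    rw [mem_matchings] at hM1
    have hcov := covered_card hM1
    have hcovle : (covered M).card ≤ Fintype.card V := by
      simpa [Finset.card_univ] using Finset.card_le_card (subset_univ (covered M))
    have hdeg : (∏ v ∈ univ \ covered M, (X - C ((deg H v : ℝ)))).natDegree < k := by
      rw [prod_natDegree, Finset.card_sdiff_of_subset (subset_univ _), Finset.card_univ, hcov]
      simp only [not_le] at hM2
      omega
    rw [coeff_eq_zero_of_natDegree_lt hdeg, mul_zero]
  rw [Finset.sum_eq_zero h2, add_zero]
  have h1 : (matchings H).filter (fun M => M.card ≤ 1)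
      = insert ∅ ((edges H).image fun e => ({e} : Finset (Sym2 V))) := by
    ext M
    simp only [Finset.mem_filter, Finset.mem_insert, Finset.mem_image, mem_matchings]
    constructor
    · rintro ⟨hM, hcard⟩
      rcases Nat.le_one_iff_eq_zero_or_eq_one.mp hcard with h | h
      · exact Or.inl (Finset.card_eq_zero.mp h)
      · obtain ⟨e, rfl⟩ := Finset.card_eq_one.mp h
        refine Or.inr ⟨e, ?_, rfl⟩
        have : e ∈ H.edgeSet := hM.1 (by simp)
        simp [edges, this]
    · rintro (rfl | ⟨e, he, rfl⟩)
      · exact ⟨mem_matchings.mp (empty_mem_matchings H), by simp⟩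
      · exact ⟨mem_matchings.mp (singleton_mem_matchings he), by simp⟩
  rw [h1, Finset.sum_insert (by simp),
    Finset.sum_image (fun a _ b _ h => Finset.singleton_injective h)]
  simp only [Finset.card_empty, pow_zero, one_mul, covered_empty, Finset.sdiff_empty,
    Finset.card_singleton, pow_one, neg_one_mul, Finset.sum_neg_distrib]
  ring

lemma covered_card_edge {H : SimpleGraph V} {e : Sym2 V} (he : e ∈ edges H) :
    (covered ({e} : Finset (Sym2 V))).card = 2 := by
  have h := covered_card (mem_matchings.mp (singleton_mem_matchings he))
  simpa using h

lemma card_cov_le (M : Finset (Sym2 V)) : (covered M).card ≤ Fintype.card V := by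
  simpa [Finset.card_univ] using Finset.card_le_card (subset_univ (covered M))

lemma edge_two_le {H : SimpleGraph V} {e : Sym2 V} (he : e ∈ edges H) :
    2 ≤ Fintype.card V := by
  rw [← covered_card_edge he]; exact card_cov_le _

lemma LM_natDegree_le (H : SimpleGraph V) : (LM ℝ H).natDegree ≤ Fintype.card V := by
  refine natDegree_sum_le_of_forall_le _ _ fun M _ => ?_
  refine natDegree_mul_le.trans ?_
  have h1 : ((-1 : ℝ[X]) ^ M.card).natDegree = 0 := by
    rw [show ((-1 : ℝ[X]) ^ M.card) = C ((-1 : ℝ) ^ M.card) by rw [map_pow, map_neg, map_one]]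
    exact natDegree_C _
  rw [h1, prod_natDegree, zero_add]
  calc (univ \ covered M).card ≤ (univ : Finset V).card :=
        Finset.card_le_card (Finset.sdiff_subset)
    _ = Fintype.card V := Finset.card_univ

lemma LM_coeff_card (H : SimpleGraph V) : (LM ℝ H).coeff (Fintype.card V) = 1 := by
  rw [LM_coeff_eq H (by omega)]
  have h0 : (∏ v ∈ (univ : Finset V), (X - C ((deg H v : ℝ)))).coeff (Fintype.card V) = 1 := by
    have h := (prod_monic univ (fun v => (deg H v : ℝ))).coeff_natDegree
    rwa [prod_natDegree, Finset.card_univ] at h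
  have h2 : ∀ e ∈ edges H,
      (∏ v ∈ univ \ covered {e}, (X - C ((deg H v : ℝ)))).coeff (Fintype.card V) = 0 := by
    intro e he
    apply coeff_eq_zero_of_natDegree_lt
    rw [prod_natDegree, Finset.card_sdiff_of_subset (subset_univ _), Finset.card_univ,
      covered_card_edge he]
    have := edge_two_le he
    omega
  rw [h0, Finset.sum_eq_zero h2, sub_zero]

lemma LM_monic (H : SimpleGraph V) : (LM ℝ H).Monic :=
  monic_of_natDegree_le_of_coeff_eq_one _ (LM_natDegree_le H) (LM_coeff_card H)

lemma LM_natDegree (H : SimpleGraph V) : (LM ℝ H).natDegree = Fintype.card V :=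
  le_antisymm (LM_natDegree_le H)
    (le_natDegree_of_ne_zero (by rw [LM_coeff_card]; exact one_ne_zero))

lemma map_val_sum (S : Finset V) (f : V → ℝ) : (S.val.map f).sum = ∑ v ∈ S, f v := rfl

lemma coeff_prod_univ_sub (f : V → ℝ) (j : ℕ) (hj : j ≤ Fintype.card V) :
    (∏ v ∈ (univ : Finset V), (X - C (f v))).coeff (Fintype.card V - j)
      = (-1) ^ j * ((univ : Finset V).val.map f).esymm j := by
  have hcard : (univ : Finset V).card = Fintype.card V := Finset.card_univ
  rw [coeff_prod_sub f univ _ (by omega)]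
  rw [show (univ : Finset V).card - (Fintype.card V - j) = j by omega]

lemma LM_coeff_sub1 (H : SimpleGraph V) (hn : 3 ≤ Fintype.card V) :
    (LM ℝ H).coeff (Fintype.card V - 1) = -(∑ v, (deg H v : ℝ)) := by
  rw [LM_coeff_eq H (by omega)]
  have h2 : ∀ e ∈ edges H,
      (∏ v ∈ univ \ covered {e}, (X - C ((deg H v : ℝ)))).coeff (Fintype.card V - 1) = 0 := by
    intro e he
    apply coeff_eq_zero_of_natDegree_lt
    rw [prod_natDegree, Finset.card_sdiff_of_subset (subset_univ _), Finset.card_univ,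
      covered_card_edge he]
    omega
  rw [Finset.sum_eq_zero h2, sub_zero, coeff_prod_univ_sub _ 1 (by omega), esymm_one',
    map_val_sum]
  ring

lemma LM_coeff_sub2 (H : SimpleGraph V) (hn : 3 ≤ Fintype.card V) :
    (LM ℝ H).coeff (Fintype.card V - 2)
      = ((∑ v, (deg H v : ℝ)) ^ 2 - ∑ v, (deg H v : ℝ) ^ 2) / 2 - ((edges H).card : ℝ) := by
  rw [LM_coeff_eq H (by omega)]
  have h2 : ∀ e ∈ edges H,
      (∏ v ∈ univ \ covered {e}, (X - C ((deg H v : ℝ)))).coeff (Fintype.card V - 2) = 1 := by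
    intro e he
    have h := (prod_monic (univ \ covered {e}) (fun v => (deg H v : ℝ))).coeff_natDegree
    rwa [prod_natDegree, Finset.card_sdiff_of_subset (subset_univ _), Finset.card_univ,
      covered_card_edge he] at h
  rw [Finset.sum_congr rfl h2, Finset.sum_const, coeff_prod_univ_sub _ 2 (by omega), esymm_two,
    map_val_sum, Multiset.map_map]
  have : ((univ : Finset V).val.map fun v => (deg H v : ℝ) ^ 2).sum = ∑ v, (deg H v : ℝ) ^ 2 :=
    rfl
  simp only [Function.comp_def, this, smul_eq_mul, mul_one]
  ring

lemma LM_coeff_sub3 (H : SimpleGraph V) (hn : 3 ≤ Fintype.card V) :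
    (LM ℝ H).coeff (Fintype.card V - 3)
      = -(((∑ v, (deg H v : ℝ)) ^ 3 - 3 * (∑ v, (deg H v : ℝ)) * (∑ v, (deg H v : ℝ) ^ 2)
            + 2 * ∑ v, (deg H v : ℝ) ^ 3) / 6)
        + ∑ e ∈ edges H, ∑ v ∈ univ \ covered {e}, (deg H v : ℝ) := by
  rw [LM_coeff_eq H (by omega)]
  have h2 : ∀ e ∈ edges H,
      (∏ v ∈ univ \ covered {e}, (X - C ((deg H v : ℝ)))).coeff (Fintype.card V - 3)
        = -(∑ v ∈ univ \ covered {e}, (deg H v : ℝ)) := by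
    intro e he
    have hc : (univ \ covered ({e} : Finset (Sym2 V))).card = Fintype.card V - 2 := by
      rw [Finset.card_sdiff_of_subset (subset_univ _), Finset.card_univ, covered_card_edge he]
    rw [coeff_prod_sub _ _ _ (by omega), hc, show Fintype.card V - 2 - (Fintype.card V - 3) = 1
      by omega, esymm_one', map_val_sum]
    ring
  rw [Finset.sum_congr rfl h2, coeff_prod_univ_sub _ 3 (by omega), esymm_three, map_val_sum,
    Multiset.map_map, Multiset.map_map]
  have e2 : ((univ : Finset V).val.map fun v => (deg H v : ℝ) ^ 2).sum = ∑ v, (deg H v : ℝ) ^ 2 :=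
    rfl
  have e3 : ((univ : Finset V).val.map fun v => (deg H v : ℝ) ^ 3).sum = ∑ v, (deg H v : ℝ) ^ 3 :=
    rfl
  simp only [Function.comp_def, e2, e3, Finset.sum_neg_distrib]
  ring

section AddEdge
variable {G : SimpleGraph V} {u v : V}

lemma addEdge_adj (x y : V) :
    (addEdge G u v).Adj x y ↔ G.Adj x y ∨ (s(x, y) = s(u, v) ∧ x ≠ y) := by
  simp [addEdge, SimpleGraph.fromEdgeSet_adj]

lemma deg_addEdge_u (huv : u ≠ v) (hne : ¬ G.Adj u v) :
    deg (addEdge G u v) u = deg G u + 1 := by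
  have hfil : (univ.filter fun w => (addEdge G u v).Adj u w)
      = insert v (univ.filter fun w => G.Adj u w) := by
    ext w
    rw [Finset.mem_filter, Finset.mem_insert, Finset.mem_filter, addEdge_adj, Sym2.eq_iff]
    simp only [Finset.mem_univ, true_and]
    constructor
    · rintro (h | ⟨(rfl | ⟨h1, -⟩), hne2⟩)
      · exact Or.inr h
      · exact Or.inl rfl
      · exact absurd h1 huv
    · rintro (rfl | h)
      · exact Or.inr ⟨Or.inl rfl, huv⟩
      · exact Or.inl h
  rw [deg, hfil, Finset.card_insert_of_notMem (by simp [hne])]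
  rfl

lemma deg_addEdge_v (huv : u ≠ v) (hne : ¬ G.Adj u v) :
    deg (addEdge G u v) v = deg G v + 1 := by
  have hfil : (univ.filter fun w => (addEdge G u v).Adj v w)
      = insert u (univ.filter fun w => G.Adj v w) := by
    ext w
    rw [Finset.mem_filter, Finset.mem_insert, Finset.mem_filter, addEdge_adj, Sym2.eq_iff]
    simp only [Finset.mem_univ, true_and]
    constructor
    · rintro (h | ⟨(⟨h1, -⟩ | rfl), hne2⟩)
      · exact Or.inr h
      · exact absurd h1.symm huv
      · exact Or.inl rfl
    · rintro (rfl | h)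
      · exact Or.inr ⟨Or.inr rfl, Ne.symm huv⟩
      · exact Or.inl h
  rw [deg, hfil, Finset.card_insert_of_notMem (by simp; intro h; exact hne h.symm)]
  rfl

lemma deg_addEdge_other {w : V} (hwu : w ≠ u) (hwv : w ≠ v) :
    deg (addEdge G u v) w = deg G w := by
  have hfil : (univ.filter fun x => (addEdge G u v).Adj w x)
      = univ.filter fun x => G.Adj w x := by
    ext x
    rw [Finset.mem_filter, Finset.mem_filter, addEdge_adj, Sym2.eq_iff]
    simp only [Finset.mem_univ, true_and]
    constructor
    · rintro (h | ⟨(⟨h1, -⟩ | ⟨h1, -⟩), -⟩)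
      · exact h
      · exact absurd h1 hwu
      · exact absurd h1 hwv
    · exact fun h => Or.inl h
  rw [deg, hfil, deg]

lemma degR_addEdge (huv : u ≠ v) (hne : ¬ G.Adj u v) (w : V) :
    (deg (addEdge G u v) w : ℝ) = (deg G w : ℝ)
      + (if w = u then 1 else 0) + (if w = v then 1 else 0) := by
  by_cases hwu : w = u
  · subst hwu
    rw [deg_addEdge_u huv hne, if_pos rfl, if_neg huv]
    push_cast; ring
  · by_cases hwv : w = v
    · subst hwv
      rw [deg_addEdge_v huv hne, if_neg hwu, if_pos rfl]
      push_cast; ring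
    · rw [deg_addEdge_other hwu hwv, if_neg hwu, if_neg hwv]
      ring

lemma suv_not_mem_edges (hne : ¬ G.Adj u v) : s(u, v) ∉ edges G := by
  simp [edges, hne]

lemma edges_addEdge (huv : u ≠ v) : edges (addEdge G u v) = insert s(u, v) (edges G) := by
  ext e
  simp only [edges, Finset.mem_filter, Finset.mem_univ, true_and, Finset.mem_insert, addEdge,
    SimpleGraph.edgeSet_sup, SimpleGraph.edgeSet_fromEdgeSet, Set.mem_union, Set.mem_diff,
    Set.mem_singleton_iff, Set.mem_setOf_eq]
  constructor
  · rintro (h | ⟨rfl, -⟩)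
    · exact Or.inr h
    · exact Or.inl rfl
  · rintro (rfl | h)
    · exact Or.inr ⟨rfl, by simp [Sym2.mk_isDiag_iff, huv]⟩
    · exact Or.inl h

lemma sum_split (huv : u ≠ v) (g : V → ℝ) :
    ∑ w, g w = (∑ w ∈ univ \ {u, v}, g w) + g u + g v := by
  rw [← Finset.sum_sdiff (subset_univ ({u, v} : Finset V)), Finset.sum_pair huv]
  ring

lemma deg_eq_degree (G : SimpleGraph V) (w : V) : deg G w = G.degree w := by
  have h : (univ.filter fun x => G.Adj w x) = G.neighborFinset w := by
    ext x; simp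
  rw [deg, h, SimpleGraph.degree]

lemma card_filter_mem_edges (G : SimpleGraph V) (w : V) :
    ((edges G).filter fun e => w ∈ e).card = deg G w := by
  have hE : edges G = G.edgeFinset := by
    ext e; simp [edges, SimpleGraph.mem_edgeFinset]
  rw [hE, ← SimpleGraph.incidenceFinset_eq_filter, SimpleGraph.card_incidenceFinset_eq_degree,
    deg_eq_degree]

end AddEdge

section Sums
variable {G : SimpleGraph V} {u v : V}

lemma sum_pow_addEdge (huv : u ≠ v) (hne : ¬ G.Adj u v) (r : ℕ) :
    ∑ w, (deg (addEdge G u v) w : ℝ) ^ r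
      = ∑ w, (deg G w : ℝ) ^ r - (deg G u : ℝ) ^ r - (deg G v : ℝ) ^ r
        + ((deg G u : ℝ) + 1) ^ r + ((deg G v : ℝ) + 1) ^ r := by
  rw [sum_split huv (fun w => (deg (addEdge G u v) w : ℝ) ^ r),
      sum_split huv (fun w => (deg G w : ℝ) ^ r)]
  have hrest : ∑ w ∈ univ \ {u, v}, (deg (addEdge G u v) w : ℝ) ^ r
      = ∑ w ∈ univ \ {u, v}, (deg G w : ℝ) ^ r := by
    refine Finset.sum_congr rfl fun w hw => ?_
    simp only [Finset.mem_sdiff, Finset.mem_univ, true_and, Finset.mem_insert,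
      Finset.mem_singleton, not_or] at hw
    rw [deg_addEdge_other hw.1 hw.2]
  rw [hrest, deg_addEdge_u huv hne, deg_addEdge_v huv hne]
  push_cast
  ring

lemma mem_covered_singleton (e : Sym2 V) (x : V) :
    x ∈ covered ({e} : Finset (Sym2 V)) ↔ x ∈ e := by
  simp [covered]

lemma sum_ite_onenot (w : V) (S : Finset (Sym2 V)) :
    ∑ e ∈ S, (if w ∈ e then (0:ℝ) else 1)
      = (S.card : ℝ) - ((S.filter fun e => w ∈ e).card : ℝ) := by
  have h : ∀ e ∈ S, (if w ∈ e then (0:ℝ) else 1) = 1 - (if w ∈ e then (1:ℝ) else 0) := by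
    intro e _; by_cases h : w ∈ e <;> simp [h]
  rw [Finset.sum_congr rfl h, Finset.sum_sub_distrib, Finset.sum_const, Finset.sum_boole]
  simp

lemma sumEdge_addEdge (huv : u ≠ v) (hne : ¬ G.Adj u v) :
    ∑ e ∈ edges (addEdge G u v), ∑ w ∈ univ \ covered {e}, (deg (addEdge G u v) w : ℝ)
      = (∑ e ∈ edges G, ∑ w ∈ univ \ covered {e}, (deg G w : ℝ))
        + ((∑ w, (deg G w : ℝ)) - (deg G u : ℝ) - (deg G v : ℝ))
        + (((edges G).card : ℝ) - (deg G u : ℝ)) + (((edges G).card : ℝ) - (deg G v : ℝ)) := by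
  rw [edges_addEdge huv, Finset.sum_insert (suv_not_mem_edges hne)]
  have h1 : ∑ w ∈ univ \ covered {s(u, v)}, (deg (addEdge G u v) w : ℝ)
      = (∑ w, (deg G w : ℝ)) - (deg G u : ℝ) - (deg G v : ℝ) := by
    rw [covered_singleton huv]
    have hrest : ∑ w ∈ univ \ {u, v}, (deg (addEdge G u v) w : ℝ)
        = ∑ w ∈ univ \ {u, v}, (deg G w : ℝ) := by
      refine Finset.sum_congr rfl fun w hw => ?_
      simp only [Finset.mem_sdiff, Finset.mem_univ, true_and, Finset.mem_insert,
        Finset.mem_singleton, not_or] at hw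
      rw [deg_addEdge_other hw.1 hw.2]
    rw [hrest]
    have hs := sum_split huv (fun w => (deg G w : ℝ))
    linarith
  have h2 : ∀ e ∈ edges G, ∑ w ∈ univ \ covered {e}, (deg (addEdge G u v) w : ℝ)
      = (∑ w ∈ univ \ covered {e}, (deg G w : ℝ))
        + (if u ∈ e then (0:ℝ) else 1) + (if v ∈ e then (0:ℝ) else 1) := by
    intro e he
    have hcongr : ∀ w ∈ univ \ covered ({e} : Finset (Sym2 V)), (deg (addEdge G u v) w : ℝ)
        = (deg G w : ℝ) + (if w = u then (1:ℝ) else 0) + (if w = v then (1:ℝ) else 0) :=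
      fun w _ => degR_addEdge huv hne w
    rw [Finset.sum_congr rfl hcongr, Finset.sum_add_distrib, Finset.sum_add_distrib,
      Finset.sum_ite_eq' (univ \ covered {e}) u (fun _ => (1:ℝ)),
      Finset.sum_ite_eq' (univ \ covered {e}) v (fun _ => (1:ℝ))]
    have hmu : u ∈ univ \ covered ({e} : Finset (Sym2 V)) ↔ ¬ u ∈ e := by
      simp [mem_covered_singleton]
    have hmv : v ∈ univ \ covered ({e} : Finset (Sym2 V)) ↔ ¬ v ∈ e := by
      simp [mem_covered_singleton]
    by_cases hu : u ∈ e <;> by_cases hv : v ∈ e <;> simp [hmu, hmv, hu, hv]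
  rw [Finset.sum_congr rfl h2, Finset.sum_add_distrib, Finset.sum_add_distrib,
    sum_ite_onenot u, sum_ite_onenot v, card_filter_mem_edges, card_filter_mem_edges, h1]
  ring

end Sums

lemma coeff_mul_quad (A : ℝ[X]) (α β : ℝ) (k2 k1 k : ℕ) (h1 : k1 + 1 = k) (h2 : k2 + 2 = k) :
    (A * ((X - C α) * (X - C β))).coeff k
      = A.coeff k2 - (α + β) * A.coeff k1 + α * β * A.coeff k := by
  subst h2
  have hk1 : k1 = k2 + 1 := by omega
  subst hk1
  have hexp : A * ((X - C α) * (X - C β))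
      = A * X ^ 2 - C (α + β) * (A * X) + C (α * β) * A := by
    rw [C_add, C_mul]; ring
  have hmx : (A * X).coeff (k2 + 2) = A.coeff (k2 + 1) := coeff_mul_X A (k2 + 1)
  rw [hexp, coeff_add, coeff_sub, coeff_mul_X_pow, coeff_C_mul, coeff_C_mul, hmx]
  try ring

lemma multiset_pair_add (E : Multiset ℝ) (x y : ℝ) :
    E + {x, y} = x ::ₘ y ::ₘ E := by
  rw [add_comm]
  simp only [Multiset.insert_eq_cons, Multiset.cons_add, Multiset.singleton_add]

lemma prod_map_pair_add (s : Multiset ℝ) (x y : ℝ) :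
    ((s + {x, y}).map fun r => X - C r).prod
      = (s.map fun r => X - C r).prod * ((X - C x) * (X - C y)) := by
  rw [multiset_pair_add, Multiset.map_cons, Multiset.map_cons, Multiset.prod_cons,
    Multiset.prod_cons]
  ring

end Aux

/-- If two-place LMRIV occurs for a connected graph `G` when the non-edge `uv` is added,
with changed roots `lam` (the largest root of `LM_G`) and `mu`, then
`lam + mu = a + b + 1` and `lam * mu = a * b`, where `a = d_G(u)`, `b = d_G(v)`.
The hypothesis that all roots of `LM_G` and of `LM_{G+uv}` are real is expressed by
saying that the multisets of real roots have full cardinality `n = |V(G)|`. -/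
theorem lemma_sum_prod [Fintype V] (G : SimpleGraph V) (hconn : G.Connected)
    (u v : V) (huv : u ≠ v) (hne : ¬ G.Adj u v)
    (hreal : ((LM ℝ G).roots).card = Fintype.card V)
    (hreal' : ((LM ℝ (addEdge G u v)).roots).card = Fintype.card V)
    (lam mu : ℝ)
    (hlam : lam ∈ (LM ℝ G).roots)
    (hmax : ∀ r ∈ (LM ℝ G).roots, r ≤ lam)
    (hmu : mu ∈ ((LM ℝ G).roots).erase lam)
    (heq : (LM ℝ (addEdge G u v)).roots =
      ((((LM ℝ G).roots).erase lam).erase mu) + {lam + 1, mu + 1}) :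
    lam + mu = (deg G u : ℝ) + (deg G v : ℝ) + 1 ∧
      lam * mu = (deg G u : ℝ) * (deg G v : ℝ) := by
  classical
  -- |V| ≥ 3
  have hn3 : 3 ≤ Fintype.card V := by
    by_contra hcon
    push_neg at hcon
    have hle : ({u, v} : Finset V).card ≤ Fintype.card V := by
      simpa [Finset.card_univ] using Finset.card_le_card (subset_univ ({u, v} : Finset V))
    have hcard2 : ({u, v} : Finset V).card = 2 := by
      rw [Finset.card_insert_of_notMem (by simpa using huv), Finset.card_singleton]
    have huniv : ({u, v} : Finset V) = univ :=
      Finset.eq_univ_of_card _ (by omega)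
    obtain ⟨p⟩ := hconn.preconnected u v
    have hadj : G.Adj u (p.getVert 1) :=
      SimpleGraph.Walk.adj_snd (SimpleGraph.Walk.not_nil_of_ne huv)
    have hmem : p.getVert 1 ∈ ({u, v} : Finset V) := huniv ▸ Finset.mem_univ _
    rcases Finset.mem_insert.mp hmem with h | h
    · rw [h] at hadj; exact G.irrefl hadj
    · rw [Finset.mem_singleton] at h; rw [h] at hadj; exact hne hadj
  obtain ⟨n', hN⟩ : ∃ k, Fintype.card V = k + 3 := ⟨Fintype.card V - 3, by omega⟩
  -- splitting of both polynomials
  have hQsplits : LM ℝ G = ((LM ℝ G).roots.map fun r => X - C r).prod :=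
    Splits.eq_prod_roots_of_monic
      (splits_iff_card_roots.mpr (by rw [LM_natDegree G]; exact hreal)) (LM_monic G)
  have hPsplits : LM ℝ (addEdge G u v)
      = ((LM ℝ (addEdge G u v)).roots.map fun r => X - C r).prod :=
    Splits.eq_prod_roots_of_monic
      (splits_iff_card_roots.mpr (by rw [LM_natDegree (addEdge G u v)]; exact hreal')) (LM_monic (addEdge G u v))
  have hQroots : (((LM ℝ G).roots.erase lam).erase mu) + {lam, mu} = (LM ℝ G).roots := by
    rw [multiset_pair_add, Multiset.cons_erase hmu, Multiset.cons_erase hlam]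
  -- the key polynomial identity
  have hkey : LM ℝ (addEdge G u v) * ((X - C lam) * (X - C mu))
      = LM ℝ G * ((X - C (lam + 1)) * (X - C (mu + 1))) := by
    conv_lhs => rw [hPsplits, heq]
    conv_rhs => rw [hQsplits, ← hQroots]
    rw [prod_map_pair_add, prod_map_pair_add]
    ring
  -- coefficients of LM ℝ G
  have hQtop : (LM ℝ G).coeff (n' + 3) = 1 := by
    have h := LM_coeff_card G; rwa [hN] at h
  have hQ1 : (LM ℝ G).coeff (n' + 2) = -(∑ w, (deg G w : ℝ)) := by
    have h := LM_coeff_sub1 G hn3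
    rwa [hN, show n' + 3 - 1 = n' + 2 by omega] at h
  have hQ2 : (LM ℝ G).coeff (n' + 1)
      = ((∑ w, (deg G w : ℝ)) ^ 2 - ∑ w, (deg G w : ℝ) ^ 2) / 2 - ((edges G).card : ℝ) := by
    have h := LM_coeff_sub2 G hn3
    rwa [hN, show n' + 3 - 2 = n' + 1 by omega] at h
  have hQ3 : (LM ℝ G).coeff n'
      = -(((∑ w, (deg G w : ℝ)) ^ 3 - 3 * (∑ w, (deg G w : ℝ)) * (∑ w, (deg G w : ℝ) ^ 2)
            + 2 * ∑ w, (deg G w : ℝ) ^ 3) / 6)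
        + ∑ e ∈ edges G, ∑ w ∈ univ \ covered {e}, (deg G w : ℝ) := by
    have h := LM_coeff_sub3 G hn3
    rwa [hN, show n' + 3 - 3 = n' by omega] at h
  -- coefficients of LM ℝ (addEdge G u v), rewritten in terms of G
  have hm' : ((edges (addEdge G u v)).card : ℝ) = ((edges G).card : ℝ) + 1 := by
    rw [edges_addEdge huv, Finset.card_insert_of_notMem (suv_not_mem_edges hne)]
    push_cast; ring
  have hPtop : (LM ℝ (addEdge G u v)).coeff (n' + 3) = 1 := by
    have h := LM_coeff_card (addEdge G u v); rwa [hN] at h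
  have hP1 : (LM ℝ (addEdge G u v)).coeff (n' + 2)
      = -((∑ w, (deg G w : ℝ)) - (deg G u : ℝ) - (deg G v : ℝ)
          + ((deg G u : ℝ) + 1) + ((deg G v : ℝ) + 1)) := by
    have h := LM_coeff_sub1 (addEdge G u v) hn3
    rw [hN, show n' + 3 - 1 = n' + 2 by omega] at h
    have hs := sum_pow_addEdge huv hne 1
    simp only [pow_one] at hs
    rw [hs] at h
    exact h
  have hP2 : (LM ℝ (addEdge G u v)).coeff (n' + 1)
      = (((∑ w, (deg G w : ℝ)) - (deg G u : ℝ) - (deg G v : ℝ)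
            + ((deg G u : ℝ) + 1) + ((deg G v : ℝ) + 1)) ^ 2
          - ((∑ w, (deg G w : ℝ) ^ 2) - (deg G u : ℝ) ^ 2 - (deg G v : ℝ) ^ 2
            + ((deg G u : ℝ) + 1) ^ 2 + ((deg G v : ℝ) + 1) ^ 2)) / 2
        - (((edges G).card : ℝ) + 1) := by
    have h := LM_coeff_sub2 (addEdge G u v) hn3
    rw [hN, show n' + 3 - 2 = n' + 1 by omega] at h
    have hs1 := sum_pow_addEdge huv hne 1
    simp only [pow_one] at hs1
    rw [hs1, sum_pow_addEdge huv hne 2, hm'] at h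
    exact h
  have hP3 : (LM ℝ (addEdge G u v)).coeff n'
      = -((((∑ w, (deg G w : ℝ)) - (deg G u : ℝ) - (deg G v : ℝ)
              + ((deg G u : ℝ) + 1) + ((deg G v : ℝ) + 1)) ^ 3
          - 3 * ((∑ w, (deg G w : ℝ)) - (deg G u : ℝ) - (deg G v : ℝ)
              + ((deg G u : ℝ) + 1) + ((deg G v : ℝ) + 1))
            * ((∑ w, (deg G w : ℝ) ^ 2) - (deg G u : ℝ) ^ 2 - (deg G v : ℝ) ^ 2
              + ((deg G u : ℝ) + 1) ^ 2 + ((deg G v : ℝ) + 1) ^ 2)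
          + 2 * ((∑ w, (deg G w : ℝ) ^ 3) - (deg G u : ℝ) ^ 3 - (deg G v : ℝ) ^ 3
              + ((deg G u : ℝ) + 1) ^ 3 + ((deg G v : ℝ) + 1) ^ 3)) / 6)
        + ((∑ e ∈ edges G, ∑ w ∈ univ \ covered {e}, (deg G w : ℝ))
            + ((∑ w, (deg G w : ℝ)) - (deg G u : ℝ) - (deg G v : ℝ))
            + (((edges G).card : ℝ) - (deg G u : ℝ))
            + (((edges G).card : ℝ) - (deg G v : ℝ))) := by
    have h := LM_coeff_sub3 (addEdge G u v) hn3
    rw [hN, show n' + 3 - 3 = n' by omega] at h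
    have hs1 := sum_pow_addEdge huv hne 1
    simp only [pow_one] at hs1
    rw [hs1, sum_pow_addEdge huv hne 2, sum_pow_addEdge huv hne 3,
      sumEdge_addEdge huv hne] at h
    exact h
  -- extract the two coefficient equations
  have e1 : (LM ℝ (addEdge G u v) * ((X - C lam) * (X - C mu))).coeff (n' + 3)
      = (LM ℝ G * ((X - C (lam + 1)) * (X - C (mu + 1)))).coeff (n' + 3) := by rw [hkey]
  have e2 : (LM ℝ (addEdge G u v) * ((X - C lam) * (X - C mu))).coeff (n' + 2)
      = (LM ℝ G * ((X - C (lam + 1)) * (X - C (mu + 1)))).coeff (n' + 2) := by rw [hkey]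
  rw [coeff_mul_quad _ lam mu (n' + 1) (n' + 2) (n' + 3) rfl rfl,
    coeff_mul_quad _ (lam + 1) (mu + 1) (n' + 1) (n' + 2) (n' + 3) rfl rfl,
    hPtop, hP1, hP2, hQtop, hQ1, hQ2] at e1
  rw [coeff_mul_quad _ lam mu n' (n' + 1) (n' + 2) rfl rfl,
    coeff_mul_quad _ (lam + 1) (mu + 1) n' (n' + 1) (n' + 2) rfl rfl,
    hP1, hP2, hP3, hQ1, hQ2, hQ3] at e2
  have hs : lam + mu = (deg G u : ℝ) + (deg G v : ℝ) + 1 := by linear_combination e1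
  refine ⟨hs, ?_⟩
  linear_combination (-(1 : ℝ) / 2) * e2
    + (((deg G u : ℝ) + (deg G v : ℝ) - (∑ w, (deg G w : ℝ))) / 2) * hs


end LMRIV
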